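/- Let Ω ⊂ ℝ² be bounded open, u ∈ C²(cl(Ω)), M := sup_Ω |u|, Q = √(1+|∇u|²), H = div(∇u/Q). Assume u = φ on ∂Ω. Then ∫_Ω Q dx ≤ |Ω| + ∫_{∂Ω}|φ| ds + |Ω|^{1/2} M (∫_Ω H² Q dx)^{1/2}. -/

import Mathlib

open MeasureTheory

/-- Area bound for graphs: for `Ω ⊂ ℝ²` bounded open with C² boundary (encoded via a
finite surface measure `σ` on `∂Ω`, a unit outer normal `ν` and the divergence
theorem), `u ∈ C²(cl(Ω))` with `u = φ` on `∂Ω`, `M ≥ sup_Ω |u|`, `Q = √(1+|∇u|²)`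
and `H = div(∇u/Q)`:
`∫_Ω Q dx ≤ |Ω| + ∫_{∂Ω}|φ| dσ + |Ω|^{1/2} M (∫_Ω H² Q dx)^{1/2}`. -/
theorem stmt18 (Ω U : Set (EuclideanSpace ℝ (Fin 2)))
    (hΩo : IsOpen Ω) (hΩb : Bornology.IsBounded Ω)
    (hUo : IsOpen U) (hΩU : closure Ω ⊆ U)
    (u : EuclideanSpace ℝ (Fin 2) → ℝ) (hu : ContDiffOn ℝ 2 u U)
    (p : EuclideanSpace ℝ (Fin 2) → Fin 2 → ℝ)
    (hp : ∀ y i, p y i = fderiv ℝ u y (EuclideanSpace.single i 1))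
    (Q : EuclideanSpace ℝ (Fin 2) → ℝ)
    (hQ : ∀ y, Q y = Real.sqrt (1 + ((p y 0) ^ 2 + (p y 1) ^ 2)))
    (H : EuclideanSpace ℝ (Fin 2) → ℝ)
    (hH : ∀ y, H y = ∑ i, fderiv ℝ (fun z => p z i / Q z) y (EuclideanSpace.single i 1))
    (ν : EuclideanSpace ℝ (Fin 2) → Fin 2 → ℝ)
    (hν : ∀ y ∈ frontier Ω, (ν y 0) ^ 2 + (ν y 1) ^ 2 = 1)
    (σ : Measure (EuclideanSpace ℝ (Fin 2))) [IsFiniteMeasure σ]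
    (hdiv : ∀ F : EuclideanSpace ℝ (Fin 2) → Fin 2 → ℝ,
      (∀ i, ContDiffOn ℝ 1 (fun y => F y i) U) →
      (∫ y in Ω, ∑ i, fderiv ℝ (fun z => F z i) y (EuclideanSpace.single i 1)) =
        ∫ y in frontier Ω, ∑ i, F y i * ν y i ∂σ)
    (φ : EuclideanSpace ℝ (Fin 2) → ℝ) (hφ : Continuous φ)
    (hbc : ∀ y ∈ frontier Ω, u y = φ y)
    (M : ℝ) (hM : ∀ y ∈ Ω, |u y| ≤ M) :
    ∫ y in Ω, Q y ≤
      (volume Ω).toReal + (∫ y in frontier Ω, |φ y| ∂σ) +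
        (volume Ω).toReal ^ ((1 : ℝ) / 2) * M *
          (∫ y in Ω, (H y) ^ 2 * Q y) ^ ((1 : ℝ) / 2) := by
  classical
  rcases Set.eq_empty_or_nonempty Ω with hΩe | ⟨y₀, hy₀⟩
  · rw [hΩe]
    simp [frontier_empty, Real.zero_rpow (by norm_num : ((1:ℝ)/2) ≠ 0)]
  have hM0 : 0 ≤ M := le_trans (abs_nonneg _) (hM y₀ hy₀)
  have hΩsubU : Ω ⊆ U := subset_closure.trans hΩU
  have hcc : IsCompact (closure Ω) := hΩb.isCompact_closure
  have hfc : IsCompact (frontier Ω) :=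
    hcc.of_isClosed_subset isClosed_frontier (frontier_subset_closure)
  have hvol : volume Ω < ⊤ := hΩb.measure_lt_top
  have hfin : IsFiniteMeasure (volume.restrict Ω) :=
    ⟨by rwa [Measure.restrict_apply_univ]⟩
  -- regularity of p, Q, p/Q, H
  have hp1 : ∀ i, ContDiffOn ℝ 1 (fun y => p y i) U := by
    intro i
    have h1 : ContDiffOn ℝ 1 (fderiv ℝ u) U := hu.fderiv_of_isOpen hUo (by norm_num)
    have h2 : ContDiffOn ℝ 1 (fun y => (fderiv ℝ u y) (EuclideanSpace.single i 1)) U :=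
      (ContinuousLinearMap.apply ℝ ℝ
        (EuclideanSpace.single i 1 : EuclideanSpace ℝ (Fin 2))).contDiff.comp_contDiffOn h1
    exact h2.congr (fun y _ => hp y i)
  have hgpos : ∀ y, (0:ℝ) < 1 + ((p y 0) ^ 2 + (p y 1) ^ 2) := fun y => by positivity
  have hQ1 : ContDiffOn ℝ 1 Q U := by
    have hg1 : ContDiffOn ℝ 1 (fun y => 1 + ((p y 0) ^ 2 + (p y 1) ^ 2)) U :=
      contDiffOn_const.add (((hp1 0).pow 2).add ((hp1 1).pow 2))
    exact (hg1.sqrt (fun y _ => (hgpos y).ne')).congr (fun y _ => hQ y)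
  have hQge : ∀ y, 1 ≤ Q y := by
    intro y
    have h1 := Real.sq_sqrt (hgpos y).le
    have h2 := Real.sqrt_nonneg (1 + ((p y 0) ^ 2 + (p y 1) ^ 2))
    rw [hQ y]
    nlinarith [sq_nonneg (p y 0), sq_nonneg (p y 1)]
  have hQpos : ∀ y, 0 < Q y := fun y => lt_of_lt_of_le one_pos (hQge y)
  have hQsq : ∀ y, Q y ^ 2 = 1 + ((p y 0) ^ 2 + (p y 1) ^ 2) := fun y => by
    rw [hQ y]; exact Real.sq_sqrt (hgpos y).le
  have hpq1 : ∀ i, ContDiffOn ℝ 1 (fun y => p y i / Q y) U :=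
    fun i => (hp1 i).div hQ1 (fun y _ => (hQpos y).ne')
  have hHc : ContinuousOn H U := by
    have h : ∀ i : Fin 2, ContinuousOn
        (fun y => fderiv ℝ (fun z => p z i / Q z) y (EuclideanSpace.single i 1)) U := by
      intro i
      have h1 : ContinuousOn (fderiv ℝ (fun z => p z i / Q z)) U :=
        (hpq1 i).continuousOn_fderiv_of_isOpen hUo le_rfl
      exact (ContinuousLinearMap.apply ℝ ℝ
        (EuclideanSpace.single i 1 : EuclideanSpace ℝ (Fin 2))).continuous.comp_continuousOn h1
    have h2 : ContinuousOn (fun y => ∑ i : Fin 2,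
        fderiv ℝ (fun z => p z i / Q z) y (EuclideanSpace.single i 1)) U := by
      apply continuousOn_finset_sum
      intro i _
      exact h i
    exact h2.congr (fun y _ => hH y)
  -- integrability on Ω
  have integ : ∀ f : EuclideanSpace ℝ (Fin 2) → ℝ, ContinuousOn f U →
      IntegrableOn f Ω volume := by
    intro f hf
    exact ((hf.mono hΩU).integrableOn_compact hcc).mono_set subset_closure
  have hQint : IntegrableOn Q Ω volume := integ Q hQ1.continuousOn
  have hinvQint : IntegrableOn (fun y => 1 / Q y) Ω volume :=
    integ _ (continuousOn_const.div hQ1.continuousOn (fun y _ => (hQpos y).ne'))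
  have huHint : IntegrableOn (fun y => u y * H y) Ω volume :=
    integ _ (hu.continuousOn.mul hHc)
  have hH2Qint : IntegrableOn (fun y => H y ^ 2 * Q y) Ω volume :=
    integ _ ((hHc.pow 2).mul hQ1.continuousOn)
  have hgOint : IntegrableOn (fun y => |H y| * Real.sqrt (Q y)) Ω volume :=
    integ _ (hHc.abs.mul (Real.continuous_sqrt.comp_continuousOn hQ1.continuousOn))
  -- divergence theorem for F = u p / Q
  have hFc1 : ∀ i : Fin 2, ContDiffOn ℝ 1 (fun y => u y * (p y i / Q y)) U :=
    fun i => (hu.of_le one_le_two).mul (hpq1 i)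
  have hdiffpq : ∀ i : Fin 2, ∀ y ∈ U, DifferentiableAt ℝ (fun z => p z i / Q z) y :=
    fun i y hy => ((hpq1 i).differentiableOn one_ne_zero).differentiableAt (hUo.mem_nhds hy)
  have hdiffu : ∀ y ∈ U, DifferentiableAt ℝ u y :=
    fun y hy => ((hu.differentiableOn two_ne_zero).differentiableAt (hUo.mem_nhds hy))
  have hdiveq : (∫ y in Ω, ∑ i : Fin 2,
        fderiv ℝ (fun z => u z * (p z i / Q z)) y (EuclideanSpace.single i 1))
      = ∫ y in frontier Ω, ∑ i : Fin 2, (u y * (p y i / Q y)) * ν y i ∂σ :=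
    hdiv (fun y i => u y * (p y i / Q y)) hFc1
  have hpt : ∀ y ∈ Ω, (∑ i : Fin 2,
        fderiv ℝ (fun z => u z * (p z i / Q z)) y (EuclideanSpace.single i 1))
      = u y * H y + Q y - 1 / Q y := by
    intro y hy
    have hyU := hΩsubU hy
    have hcomp : ∀ i : Fin 2,
        fderiv ℝ (fun z => u z * (p z i / Q z)) y (EuclideanSpace.single i 1)
        = u y * fderiv ℝ (fun z => p z i / Q z) y (EuclideanSpace.single i 1)
          + (p y i / Q y) * (p y i) := by
      intro i
      have e : fderiv ℝ (fun z => u z * (p z i / Q z)) y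
          = u y • fderiv ℝ (fun z => p z i / Q z) y + (p y i / Q y) • fderiv ℝ u y :=
        fderiv_mul (hdiffu y hyU) (hdiffpq i y hyU)
      rw [e]
      simp only [ContinuousLinearMap.add_apply, ContinuousLinearMap.smul_apply, smul_eq_mul]
      rw [← hp y i]
    rw [Fin.sum_univ_two, hcomp 0, hcomp 1, hH y, Fin.sum_univ_two]
    have hQne := (hQpos y).ne'
    field_simp
    nlinarith [hQsq y]
  have hlhs : (∫ y in Ω, ∑ i : Fin 2,
        fderiv ℝ (fun z => u z * (p z i / Q z)) y (EuclideanSpace.single i 1))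
      = (∫ y in Ω, u y * H y) + (∫ y in Ω, Q y) - ∫ y in Ω, 1 / Q y := by
    rw [setIntegral_congr_fun hΩo.measurableSet hpt]
    have h1 : IntegrableOn (fun y => u y * H y + Q y) Ω volume := huHint.add hQint
    rw [integral_sub h1 hinvQint, integral_add huHint hQint]
  -- boundary bound
  have hbd : (∫ y in frontier Ω, ∑ i : Fin 2, (u y * (p y i / Q y)) * ν y i ∂σ)
      ≤ ∫ y in frontier Ω, |φ y| ∂σ := by
    have hφint : IntegrableOn (fun y => |φ y|) (frontier Ω) σ :=
      (hφ.abs.continuousOn).integrableOn_compact hfc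
    have hptb : ∀ y ∈ frontier Ω,
        (∑ i : Fin 2, (u y * (p y i / Q y)) * ν y i) ≤ |φ y| := by
      intro y hy
      rw [Fin.sum_univ_two]
      have h1 := hν y hy
      have hQp := hQpos y
      have hcs : |p y 0 * ν y 0 + p y 1 * ν y 1| ≤ Q y := by
        have h2 : (p y 0 * ν y 0 + p y 1 * ν y 1) ^ 2 ≤ Q y ^ 2 := by
          nlinarith [sq_nonneg (p y 0 * ν y 1 - p y 1 * ν y 0), hQsq y]
        exact abs_le.mpr (abs_le_of_sq_le_sq' h2 hQp.le)
      have e1 : (u y * (p y 0 / Q y)) * ν y 0 + (u y * (p y 1 / Q y)) * ν y 1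
          = u y * ((p y 0 * ν y 0 + p y 1 * ν y 1) / Q y) := by ring
      calc (u y * (p y 0 / Q y)) * ν y 0 + (u y * (p y 1 / Q y)) * ν y 1
          ≤ |u y * ((p y 0 * ν y 0 + p y 1 * ν y 1) / Q y)| := e1 ▸ le_abs_self _
        _ = |u y| * (|p y 0 * ν y 0 + p y 1 * ν y 1| / Q y) := by
            rw [abs_mul, abs_div, abs_of_pos hQp]
        _ ≤ |u y| * (Q y / Q y) := by gcongr
        _ = |φ y| := by rw [div_self hQp.ne', mul_one, hbc y hy]
    by_cases hgint : IntegrableOn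
        (fun y => ∑ i : Fin 2, (u y * (p y i / Q y)) * ν y i) (frontier Ω) σ
    · exact setIntegral_mono_on hgint hφint isClosed_frontier.measurableSet hptb
    · rw [integral_undef hgint]
      exact integral_nonneg (fun y => abs_nonneg _)
  -- Cauchy–Schwarz bound
  have hCS : |∫ y in Ω, u y * H y| ≤
      (volume Ω).toReal ^ ((1:ℝ)/2) * M * (∫ y in Ω, H y ^ 2 * Q y) ^ ((1:ℝ)/2) := by
    have step1 : |∫ y in Ω, u y * H y| ≤ ∫ y in Ω, |u y * H y| := by
      have h := norm_integral_le_integral_norm (μ := volume.restrict Ω)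
        (fun y => u y * H y)
      simp only [Real.norm_eq_abs] at h
      exact h
    have step2 : (∫ y in Ω, |u y * H y|) ≤ ∫ y in Ω, M * (|H y| * Real.sqrt (Q y)) := by
      apply setIntegral_mono_on (integ _ (hu.continuousOn.mul hHc).abs)
        (hgOint.const_mul M) hΩo.measurableSet
      intro y hy
      rw [Pi.mul_apply, abs_mul]
      have h1 : 1 ≤ Real.sqrt (Q y) := by
        have h2 := Real.sq_sqrt (hQpos y).le
        have h3 := Real.sqrt_nonneg (Q y)
        nlinarith [hQge y]
      calc |u y| * |H y| ≤ M * |H y| :=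
            mul_le_mul_of_nonneg_right (hM y hy) (abs_nonneg _)
        _ ≤ M * (|H y| * Real.sqrt (Q y)) := by
            apply mul_le_mul_of_nonneg_left _ hM0
            nlinarith [abs_nonneg (H y)]
    have hconj : Real.HolderConjugate 2 2 := Real.holderConjugate_iff.mpr ⟨by norm_num, by norm_num⟩
    have hg2 : MemLp (fun y => |H y| * Real.sqrt (Q y)) (ENNReal.ofReal 2)
        (volume.restrict Ω) := by
      rw [show ENNReal.ofReal 2 = 2 by norm_num]
      rw [memLp_two_iff_integrable_sq hgOint.aestronglyMeasurable]
      have e : (fun y => (|H y| * Real.sqrt (Q y)) ^ 2) = fun y => H y ^ 2 * Q y := by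
        funext y
        rw [mul_pow, sq_abs, Real.sq_sqrt (hQpos y).le]
      rw [e]; exact hH2Qint
    have hf2 : MemLp (fun _ : EuclideanSpace ℝ (Fin 2) => (1:ℝ)) (ENNReal.ofReal 2)
        (volume.restrict Ω) := memLp_const 1
    have hold := integral_mul_le_Lp_mul_Lq_of_nonneg hconj
      (Filter.Eventually.of_forall (fun y => zero_le_one))
      (Filter.Eventually.of_forall (fun y => by positivity)) hf2 hg2
    simp only [one_mul, Real.one_rpow] at hold
    have e2 : (∫ _y in Ω, (1:ℝ)) = (volume Ω).toReal := by
      simp [Measure.restrict_apply_univ, Measure.real]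
    have e3 : (∫ y in Ω, (|H y| * Real.sqrt (Q y)) ^ (2:ℝ))
        = ∫ y in Ω, H y ^ 2 * Q y := by
      apply integral_congr_ae
      apply Filter.Eventually.of_forall
      intro y
      show (|H y| * Real.sqrt (Q y)) ^ (2:ℝ) = H y ^ 2 * Q y
      rw [Real.rpow_two, mul_pow, sq_abs, Real.sq_sqrt (hQpos y).le]
    rw [e2, e3] at hold
    calc |∫ y in Ω, u y * H y| ≤ ∫ y in Ω, M * (|H y| * Real.sqrt (Q y)) :=
          step1.trans step2
      _ = M * ∫ y in Ω, |H y| * Real.sqrt (Q y) := integral_const_mul M _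
      _ ≤ M * ((volume Ω).toReal ^ ((1:ℝ)/2) * (∫ y in Ω, H y ^ 2 * Q y) ^ ((1:ℝ)/2)) :=
          mul_le_mul_of_nonneg_left hold hM0
      _ = (volume Ω).toReal ^ ((1:ℝ)/2) * M * (∫ y in Ω, H y ^ 2 * Q y) ^ ((1:ℝ)/2) := by
          ring
  -- bound on ∫ 1/Q
  have hinv : (∫ y in Ω, 1 / Q y) ≤ (volume Ω).toReal := by
    have hconst : IntegrableOn (fun _ : EuclideanSpace ℝ (Fin 2) => (1:ℝ)) Ω volume :=
      integrableOn_const hvol.ne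
    have h := setIntegral_mono_on hinvQint hconst hΩo.measurableSet
      (fun y _ => (div_le_one (hQpos y)).mpr (hQge y))
    simpa [Measure.restrict_apply_univ, Measure.real] using h
  -- combine
  have hIQ : (∫ y in Ω, Q y)
      = (∫ y in frontier Ω, ∑ i : Fin 2, (u y * (p y i / Q y)) * ν y i ∂σ)
        - (∫ y in Ω, u y * H y) + ∫ y in Ω, 1 / Q y := by
    rw [← hdiveq, hlhs]; ring
  linarith [hCS, hbd, hinv, neg_abs_le (∫ y in Ω, u y * H y)]
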